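/- arXiv:2505.05630 — 5 statements merged into one kernel-verified Lean document; each statement's English description precedes it below -/
import Mathlib

section
/- If a set of gcd conditions (Q, f) is admissible (i.e., there exists a tuple (n_1,...,n_k) of positive integers with gcd{n_i : i in T} = f(T) for all T in Q), then for every prime p and every T in Q, g_p(T) = min{v_i^(p) : i in T}, where v_i^(p) = max({0} ∪ {g_p(T') : T' in Q, i in T'}). -/
/-- If the set of gcd conditions `(Q, f)` is admissible, then for every
prime `p` and every `T ∈ Q`, `g_p(T) = min {v_i^(p) : i ∈ T}`, where
`v_i^(p) = max ({0} ∪ {g_p(T') : T' ∈ Q, i ∈ T'})`. -/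
theorem stmt_1 (k : ℕ) (hk : 2 ≤ k)
    (Q : Finset (Finset (Fin k))) (hQ : ∀ T ∈ Q, 2 ≤ T.card)
    (f : Finset (Fin k) → ℕ) (hf : ∀ T ∈ Q, 0 < f T)
    (hadm : ∃ n : Fin k → ℕ, (∀ i, 0 < n i) ∧ ∀ T ∈ Q, T.gcd n = f T)
    (p : ℕ) (hp : p.Prime)
    (T : Finset (Fin k)) (hT : T ∈ Q) (hTne : T.Nonempty) :
    (f T).factorization p =
      T.inf' hTne (fun i =>
        (Q.filter (fun T' => i ∈ T')).sup (fun T' => (f T').factorization p)) := by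
  obtain ⟨n, hn, hgcd⟩ := hadm
  -- ord_p(f T') ≤ ord_p(n i) for i ∈ T' ∈ Q
  have key : ∀ T' ∈ Q, ∀ i ∈ T', (f T').factorization p ≤ (n i).factorization p := by
    intro T' hT' i hi
    have hdvd : f T' ∣ n i := (hgcd T' hT') ▸ Finset.gcd_dvd hi
    exact (Nat.factorization_le_iff_dvd (hf T' hT').ne' (hn i).ne').2 hdvd p
  -- ord_p(f T) = min over i ∈ T of ord_p(n i)
  have hmin : (f T).factorization p = T.inf' hTne (fun i => (n i).factorization p) := by
    apply le_antisymm
    · exact Finset.le_inf' _ _ (fun i hi => key T hT i hi)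
    · set m := T.inf' hTne (fun i => (n i).factorization p) with hm
      have hdvd : p ^ m ∣ f T := by
        rw [← hgcd T hT]
        apply Finset.dvd_gcd
        intro i hi
        exact dvd_trans (pow_dvd_pow p (Finset.inf'_le _ hi)) (Nat.ordProj_dvd (n i) p)
      exact (Nat.Prime.pow_dvd_iff_le_factorization hp (hf T hT).ne').1 hdvd
  apply le_antisymm
  · -- each v_i ≥ ord_p(f T), since T itself is in the filter
    apply Finset.le_inf'
    intro i hi
    exact Finset.le_sup (f := fun T' => (f T').factorization p)
      (Finset.mem_filter.2 ⟨hT, hi⟩)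
  · -- pick i attaining min of ord_p(n i); v_i ≤ ord_p(n i) = ord_p(f T)
    obtain ⟨i, hi, hieq⟩ := Finset.exists_mem_eq_inf' hTne (fun i => (n i).factorization p)
    refine le_trans (Finset.inf'_le _ hi) ?_
    apply Finset.sup_le
    intro T' hT'
    rw [Finset.mem_filter] at hT'
    calc (f T').factorization p ≤ (n i).factorization p := key T' hT'.1 i hT'.2
      _ = (f T).factorization p := by rw [hmin, hieq]
end

section
/- A set of gcd conditions (Q, f) is admissible if and only if for every prime p and every T in Q, g_p(T) = min{v_i^(p) : i in T}. -/
lemma fact_finset_gcd {α : Type*} [DecidableEq α] (p : ℕ) (s : Finset α) (hs : s.Nonempty)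
    (n : α → ℕ) (hn : ∀ i ∈ s, n i ≠ 0) :
    (s.gcd n).factorization p = s.inf' hs (fun i => (n i).factorization p) := by
  induction hs using Finset.Nonempty.cons_induction with
  | singleton a => simp
  | cons a s ha hs ih =>
    have hc : (Finset.cons a s ha).gcd n = gcd (n a) (s.gcd n) := by
      simp [Finset.cons_eq_insert, Finset.gcd_insert]
    rw [hc, Finset.inf'_cons]
    have h1 : n a ≠ 0 := hn a (Finset.mem_cons_self a s)
    have h2 : s.gcd n ≠ 0 := by
      rw [Ne, Finset.gcd_eq_zero_iff]
      obtain ⟨b, hb⟩ := hs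
      exact fun h => hn b (Finset.mem_cons_of_mem hb) (h b hb)
    have : gcd (n a) (s.gcd n) = Nat.gcd (n a) (s.gcd n) := rfl
    rw [this, Nat.factorization_gcd h1 h2, Finsupp.inf_apply,
      ih (fun i hi => hn i (Finset.mem_cons_of_mem hi))]

lemma finset_lcm_ne_zero {α : Type*} [DecidableEq α] (s : Finset α)
    (f : α → ℕ) (hf : ∀ a ∈ s, f a ≠ 0) : s.lcm f ≠ 0 := by
  induction s using Finset.induction_on with
  | empty => simp
  | insert _ _ hb ih =>
    rename_i b t
    rw [Finset.lcm_insert]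
    have : lcm (f b) (t.lcm f) = Nat.lcm (f b) (t.lcm f) := rfl
    rw [this]
    exact Nat.lcm_ne_zero (hf b (Finset.mem_insert_self b t))
      (ih (fun c hc => hf c (Finset.mem_insert_of_mem hc)))

lemma fact_finset_lcm {α : Type*} [DecidableEq α] (p : ℕ) (s : Finset α)
    (f : α → ℕ) (hf : ∀ a ∈ s, f a ≠ 0) :
    (s.lcm f).factorization p = s.sup (fun a => (f a).factorization p) := by
  induction s using Finset.induction_on with
  | empty => simp
  | insert _ _ ha ih =>
    rename_i a s
    rw [Finset.lcm_insert, Finset.sup_insert]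
    have h1 : f a ≠ 0 := hf a (Finset.mem_insert_self a s)
    have h2 : s.lcm f ≠ 0 := finset_lcm_ne_zero s f (fun c hc => hf c (Finset.mem_insert_of_mem hc))
    have : lcm (f a) (s.lcm f) = Nat.lcm (f a) (s.lcm f) := rfl
    rw [this, Nat.factorization_lcm h1 h2, Finsupp.sup_apply,
      ih (fun b hb => hf b (Finset.mem_insert_of_mem hb))]

/-- The set of gcd conditions `(Q, f)` is admissible if and only if for
every prime `p` and every `T ∈ Q`, `g_p(T) = min {v_i^(p) : i ∈ T}`. -/
theorem stmt_3 (k : ℕ) (hk : 2 ≤ k)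
    (Q : Finset (Finset (Fin k))) (hQ : ∀ T ∈ Q, 2 ≤ T.card)
    (f : Finset (Fin k) → ℕ) (hf : ∀ T ∈ Q, 0 < f T) :
    (∃ n : Fin k → ℕ, (∀ i, 0 < n i) ∧ ∀ T ∈ Q, T.gcd n = f T) ↔
      (∀ p : ℕ, p.Prime → ∀ T ∈ Q, ∀ hTne : T.Nonempty,
        (f T).factorization p =
          T.inf' hTne (fun i =>
            (Q.filter (fun T' => i ∈ T')).sup (fun T' => (f T').factorization p))) := by
  constructor
  · rintro ⟨n, hn, hgcd⟩ p hp T hT hTne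
    have hn' : ∀ i : Fin k, n i ≠ 0 := fun i => (hn i).ne'
    have hg : ∀ T' ∈ Q, ∀ hT'ne : T'.Nonempty,
        (f T').factorization p = T'.inf' hT'ne (fun i => (n i).factorization p) := by
      intro T' hT' hT'ne
      rw [← hgcd T' hT', fact_finset_gcd p T' hT'ne n (fun i _ => hn' i)]
    have hTeq := hg T hT hTne
    rw [hTeq]
    apply le_antisymm
    · -- inf a ≤ inf v : for each i ∈ T, inf a = g(T) ≤ v i
      apply Finset.le_inf'
      intro i hi
      refine le_trans ?_ (Finset.le_sup (f := fun T' => (f T').factorization p)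
        (Finset.mem_filter.mpr ⟨hT, hi⟩))
      exact hTeq.ge
    · -- inf v ≤ inf a : since v i ≤ a i for i ∈ T
      apply Finset.le_inf'
      intro i hi
      refine le_trans (Finset.inf'_le _ hi) ?_
      apply Finset.sup_le
      intro T' hT'
      rw [Finset.mem_filter] at hT'
      have hT'ne : T'.Nonempty := ⟨i, hT'.2⟩
      rw [hg T' hT'.1 hT'ne]
      exact Finset.inf'_le _ hT'.2
  · intro h
    set n : Fin k → ℕ := fun i => (Q.filter (fun T' => i ∈ T')).lcm f with hn
    have hfne : ∀ T' ∈ Q, f T' ≠ 0 := fun T' hT' => (hf T' hT').ne'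
    have hnpos : ∀ i, n i ≠ 0 := fun i =>
      finset_lcm_ne_zero _ f (fun T' hT' => hfne T' (Finset.mem_filter.mp hT').1)
    have hnfact : ∀ i, (n i).factorization =
        fun p => (Q.filter (fun T' => i ∈ T')).sup (fun T' => (f T').factorization p) := by
      intro i
      ext p
      exact fact_finset_lcm p _ f (fun T' hT' => hfne T' (Finset.mem_filter.mp hT').1)
    refine ⟨n, fun i => Nat.pos_of_ne_zero (hnpos i), fun T hT => ?_⟩
    have hTne : T.Nonempty := Finset.card_pos.mp (lt_of_lt_of_le (by norm_num) (hQ T hT))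
    have hgne : T.gcd n ≠ 0 := by
      rw [Ne, Finset.gcd_eq_zero_iff]
      obtain ⟨b, hb⟩ := hTne
      exact fun hz => hnpos b (hz b hb)
    apply Nat.factorization_inj (by simpa using hgne) (by simpa using hfne T hT)
    ext p
    by_cases hp : p.Prime
    · rw [fact_finset_gcd p T hTne n (fun i _ => hnpos i), h p hp T hT hTne]
      apply Finset.inf'_congr _ rfl
      intro i hi
      rw [hnfact i]
    · rw [Nat.factorization_eq_zero_of_not_prime _ hp,
        Nat.factorization_eq_zero_of_not_prime _ hp]
end

section
/- Let p be a prime and suppose f ≡ 1 on Q, with W a cover of Q. Then for complex s_1,...,s_k with positive real parts, ∑_{a_1,...,a_k ≥ 0} δ(a)/p^{a_1 s_1 + ... + a_k s_k} = ∏_{i∈S}(1-p^{-s_i})^{-1} · ∑'_{V ⊆ W} ∏_{v∈V} p^{-s_v} ∏_{i ∈ (W\V) ∪ M(V)} (1-p^{-s_i}), where δ(a) = 1 iff min{a_i : i in T} = 0 for all T in Q, the primed sum runs over independent subsets V of W (those containing no T in Q), and M(V) = N(V) \ W. -/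
set_option maxHeartbeats 1000000

open scoped Classical
open Finset

private lemma tsum_pi_prod : ∀ (n : ℕ) (f : Fin n → ℕ → ℂ),
    (∀ i, Summable fun m => ‖f i m‖) →
    (Summable fun a : Fin n → ℕ => ‖∏ i, f i (a i)‖) ∧
    (∑' a : Fin n → ℕ, ∏ i, f i (a i)) = ∏ i, ∑' m, f i m := by
  intro n
  induction n with
  | zero =>
    intro f _
    constructor
    · exact Summable.of_finite
    · simp [tsum_eq_single (fun i : Fin 0 => (i.elim0 : ℕ))
        (fun b hb => absurd (Subsingleton.elim b _) hb)]
  | succ n ih =>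
    intro f hf
    obtain ⟨S2, E2⟩ := ih (fun i => f i.succ) (fun i => hf i.succ)
    set e := Fin.consEquiv (fun _ : Fin (n + 1) => ℕ) with he
    have hprod : ∀ q : ℕ × (Fin n → ℕ),
        ∏ i, f i (e q i) = f 0 q.1 * ∏ i, f i.succ (q.2 i) := by
      intro q
      rw [Fin.prod_univ_succ]
      simp [he, Fin.consEquiv]
    have hsum : Summable fun q : ℕ × (Fin n → ℕ) =>
        ‖f 0 q.1 * ∏ i, f i.succ (q.2 i)‖ := by
      simp only [norm_mul]
      apply Summable.mul_of_nonneg (hf 0) S2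
      · intro m; positivity
      · intro b; positivity
    constructor
    · rw [← e.summable_iff]
      have : ((fun a : Fin (n + 1) → ℕ => ‖∏ i, f i (a i)‖) ∘ e)
          = fun q : ℕ × (Fin n → ℕ) => ‖f 0 q.1 * ∏ i, f i.succ (q.2 i)‖ := by
        funext q
        simp only [Function.comp_apply]
        rw [hprod]
      rw [this]
      exact hsum
    · rw [← e.tsum_eq]
      calc (∑' q : ℕ × (Fin n → ℕ), ∏ i, f i (e q i))
          = ∑' q : ℕ × (Fin n → ℕ), f 0 q.1 * ∏ i, f i.succ (q.2 i) := tsum_congr hprod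
        _ = (∑' m, f 0 m) * ∑' b : Fin n → ℕ, ∏ i, f i.succ (b i) :=
            (tsum_mul_tsum_of_summable_norm (hf 0) S2).symm
        _ = ∏ i, ∑' m, f i m := by rw [E2, Fin.prod_univ_succ]

/-- The per-coordinate weight function. -/
private def auxF {k : ℕ} (x : Fin k → ℂ) (V Z : Finset (Fin k)) (i : Fin k) (n : ℕ) : ℂ :=
  if i ∈ V then (if n = 0 then 0 else x i ^ n)
  else if i ∈ Z then (if n = 0 then 1 else 0)
  else x i ^ n

/-- with `f ≡ 1` and `W` a cover of `Q`, for every prime `p` and complex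
`s_1, …, s_k` with positive real parts,
`∑_{a} δ(a) p^{-(a_1 s_1 + ⋯ + a_k s_k)}
  = ∏_{i ∈ S} (1 - p^{-s_i})⁻¹ ⬝ ∑'_{V ⊆ W} ∏_{v ∈ V} p^{-s_v}
      ∏_{i ∈ (W∖V) ∪ M(V)} (1 - p^{-s_i})`,
where `δ(a) = 1` iff `min {a i : i ∈ T} = 0` for all `T ∈ Q`, the primed sum runs
over independent `V ⊆ W`, and `M(V) = N(V) ∖ W`. -/
theorem stmt_9 (k : ℕ) (hk : 2 ≤ k)
    (Q : Finset (Finset (Fin k))) (hQ : ∀ T ∈ Q, 2 ≤ T.card)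
    (W : Finset (Fin k)) (hW : ∀ T ∈ Q, (T \ W).card ≤ 1)
    (p : ℕ) (hp : p.Prime)
    (s : Fin k → ℂ) (hs : ∀ i, 0 < (s i).re) :
    (∑' a : Fin k → ℕ,
        (if ∀ T ∈ Q, ∀ hTne : T.Nonempty, T.inf' hTne a = 0 then (1 : ℂ) else 0) *
          (p : ℂ) ^ (-(∑ i, (a i : ℂ) * s i))) =
      (∏ i : Fin k, (1 - (p : ℂ) ^ (-(s i)))⁻¹) *
        ∑ V ∈ W.powerset.filter (fun V => ∀ T ∈ Q, ¬ T ⊆ V),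
          (∏ v ∈ V, (p : ℂ) ^ (-(s v))) *
            ∏ i ∈ (W \ V) ∪
                ((Finset.univ.filter (fun x => ∃ T ∈ Q, T \ V = {x})) \ W),
              (1 - (p : ℂ) ^ (-(s i))) := by
  set x : Fin k → ℂ := fun i => (p : ℂ) ^ (-(s i)) with hxdef
  have hp0 : (p : ℂ) ≠ 0 := Nat.cast_ne_zero.mpr hp.pos.ne'
  have hpR : (1 : ℝ) < (p : ℝ) := by exact_mod_cast hp.one_lt
  have hx : ∀ i, ‖x i‖ < 1 := by
    intro i
    have h0 : (0 : ℝ) < (p : ℝ) := lt_trans one_pos hpR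
    have hxi : x i = (((p : ℝ) : ℂ)) ^ (-(s i)) := by
      rw [hxdef]
      norm_num
    have : ‖x i‖ = (p : ℝ) ^ (-(s i)).re := by
      rw [hxi, Complex.norm_cpow_eq_rpow_re_of_pos h0]
    rw [this]
    apply Real.rpow_lt_one_of_one_lt_of_neg hpR
    simpa using (hs i)
  have hx1 : ∀ i, (1 : ℂ) - x i ≠ 0 := by
    intro i h
    have h2 : x i = 1 := by linear_combination -h
    have h3 := hx i
    rw [h2] at h3
    simp at h3
  -- rewrite the exponential term as a product of powers
  have hcpow : ∀ a : Fin k → ℕ,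
      (p : ℂ) ^ (-(∑ i, (a i : ℂ) * s i)) = ∏ i, x i ^ a i := by
    intro a
    have h1 : (-(∑ i, (a i : ℂ) * s i)) = ∑ i, ((a i : ℕ) : ℂ) * (-(s i)) := by
      rw [← Finset.sum_neg_distrib]
      congr 1
      funext i
      ring
    rw [h1]
    have h2 : ∀ (t : Finset (Fin k)), (p : ℂ) ^ (∑ i ∈ t, ((a i : ℕ) : ℂ) * (-(s i)))
        = ∏ i ∈ t, x i ^ a i := by
      intro t
      induction t using Finset.cons_induction with
      | empty => simp [Complex.cpow_zero]
      | cons j t hj ih =>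
        rw [Finset.sum_cons, Finset.prod_cons, Complex.cpow_add _ _ hp0, ih,
          Complex.cpow_nat_mul]
    exact h2 univ
  -- notation for the index sets
  set 𝒱 : Finset (Finset (Fin k)) := W.powerset.filter (fun V => ∀ T ∈ Q, ¬ T ⊆ V) with h𝒱
  set Z : Finset (Fin k) → Finset (Fin k) := fun V => (W \ V) ∪
      ((Finset.univ.filter (fun y => ∃ T ∈ Q, T \ V = {y})) \ W) with hZ
  -- membership in Z V implies not in V, for V ⊆ W
  have hZV : ∀ V, V ⊆ W → ∀ i ∈ Z V, i ∉ V := by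
    intro V hVW i hi
    rcases mem_union.mp hi with h | h
    · exact (mem_sdiff.mp h).2
    · intro hiV
      exact (mem_sdiff.mp h).2 (hVW hiV)
  -- summability of coordinate functions
  have hFs : ∀ (V : Finset (Fin k)) (i : Fin k),
      Summable fun n => ‖auxF x V (Z V) i n‖ := by
    intro V i
    apply Summable.of_nonneg_of_le (fun n => norm_nonneg _) (fun n => ?_)
      (summable_geometric_of_lt_one (norm_nonneg (x i)) (hx i))
    unfold auxF
    split_ifs with h1 h2 h3 h4
    · simpa using pow_nonneg (norm_nonneg (x i)) n
    · rw [norm_pow]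
    · simp [h4]
    · simpa using pow_nonneg (norm_nonneg (x i)) n
    · rw [norm_pow]
  -- coordinate tsums
  have htV : ∀ (V Z' : Finset (Fin k)) (i : Fin k), i ∈ V →
      ∑' n, auxF x V Z' i n = x i * (1 - x i)⁻¹ := by
    intro V Z' i hi
    have heq : (fun n => auxF x V Z' i n)
        = fun n => x i ^ n - (if n = 0 then 1 else 0) := by
      funext n
      unfold auxF
      rw [if_pos hi]
      by_cases hn : n = 0
      · simp [hn]
      · simp [hn]
    rw [heq, Summable.tsum_sub (f := fun n => x i ^ n) (g := fun n => if n = 0 then (1 : ℂ) else 0) (summable_geometric_of_norm_lt_one (hx i))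
      (summable_of_ne_finset_zero (s := {0}) (by intro n hn; simp at hn; simp [hn])),
      tsum_geometric_of_norm_lt_one (hx i), tsum_ite_eq (0 : ℕ) (fun _ => (1 : ℂ))]
    field_simp [hx1 i]
    ring
  have htZ : ∀ (V Z' : Finset (Fin k)) (i : Fin k), i ∉ V → i ∈ Z' →
      ∑' n, auxF x V Z' i n = 1 := by
    intro V Z' i hi hiZ
    have heq : (fun n => auxF x V Z' i n) = fun n => if n = 0 then (1 : ℂ) else 0 := by
      funext n
      unfold auxF
      rw [if_neg hi, if_pos hiZ]
    rw [heq, tsum_ite_eq (0 : ℕ) (fun _ => (1 : ℂ))]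
  have htF : ∀ (V Z' : Finset (Fin k)) (i : Fin k), i ∉ V → i ∉ Z' →
      ∑' n, auxF x V Z' i n = (1 - x i)⁻¹ := by
    intro V Z' i hi hiZ
    have heq : (fun n => auxF x V Z' i n) = fun n => x i ^ n := by
      funext n
      unfold auxF
      rw [if_neg hi, if_neg hiZ]
    rw [heq, tsum_geometric_of_norm_lt_one (hx i)]
  -- the pointwise decomposition
  have key : ∀ a : Fin k → ℕ,
      (if ∀ T ∈ Q, ∀ hTne : T.Nonempty, T.inf' hTne a = 0 then (1 : ℂ) else 0) *
        ∏ i, x i ^ a i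
      = ∑ V ∈ 𝒱, ∏ i, auxF x V (Z V) i (a i) := by
    intro a
    by_cases hδ : ∀ T ∈ Q, ∀ hTne : T.Nonempty, T.inf' hTne a = 0
    · rw [if_pos hδ, one_mul]
      set V₀ : Finset (Fin k) := W.filter (fun i => a i ≠ 0) with hV₀
      have hV₀mem : V₀ ∈ 𝒱 := by
        rw [h𝒱, mem_filter, mem_powerset]
        refine ⟨filter_subset _ _, ?_⟩
        intro T hT hTV
        have hTne : T.Nonempty := card_pos.mp (lt_of_lt_of_le two_pos (hQ T hT))
        obtain ⟨j, hjT, hj⟩ := Finset.exists_mem_eq_inf' hTne a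
        have haj : a j = 0 := by rw [← hj]; exact hδ T hT hTne
        have hjV : j ∈ V₀ := hTV hjT
        rw [hV₀, mem_filter] at hjV
        exact hjV.2 haj
      rw [Finset.sum_eq_single V₀ ?side1 ?side2]
      case side2 => intro h; exact absurd hV₀mem h
      case side1 =>
        intro V hV hne
        rw [h𝒱, mem_filter, mem_powerset] at hV
        have hVW : V ⊆ W := hV.1
        have : ∃ i, (i ∈ V ∧ i ∉ V₀) ∨ (i ∈ V₀ ∧ i ∉ V) := by
          by_contra hcon
          push_neg at hcon
          apply hne
          apply Finset.ext
          intro i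
          constructor
          · intro hi
            exact (hcon i).1 hi
          · intro hi
            exact (hcon i).2 hi
        obtain ⟨i, hi⟩ := this
        rcases hi with ⟨hiV, hiV₀⟩ | ⟨hiV₀, hiV⟩
        · have hiW : i ∈ W := hVW hiV
          have hai : a i = 0 := by
            by_contra hne'
            exact hiV₀ (by rw [hV₀, mem_filter]; exact ⟨hiW, hne'⟩)
          apply Finset.prod_eq_zero (mem_univ i)
          unfold auxF
          rw [if_pos hiV, hai, if_pos rfl]
        · rw [hV₀, mem_filter] at hiV₀
          have hai : a i ≠ 0 := hiV₀.2
          have hiW : i ∈ W := hiV₀.1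
          apply Finset.prod_eq_zero (mem_univ i)
          have hiZ : i ∈ Z V := by
            simp only [hZ]
            exact mem_union_left _ (mem_sdiff.mpr ⟨hiW, hiV⟩)
          unfold auxF
          rw [if_neg hiV, if_pos hiZ, if_neg hai]
      -- main term
      apply Finset.prod_congr rfl
      intro i _
      by_cases hiV : i ∈ V₀
      · have hai : a i ≠ 0 := by
          have h' := hiV
          rw [hV₀, mem_filter] at h'
          exact h'.2
        unfold auxF
        rw [if_pos hiV, if_neg hai]
      · by_cases hiZ : i ∈ Z V₀
        · have hai : a i = 0 := by
            have hiZ' := hiZ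
            simp only [hZ] at hiZ'
            rcases mem_union.mp hiZ' with h | h
            · rcases mem_sdiff.mp h with ⟨hiW, hiV'⟩
              by_contra hne'
              exact hiV' (by rw [hV₀, mem_filter]; exact ⟨hiW, hne'⟩)
            · rcases mem_sdiff.mp h with ⟨hN, hiW⟩
              obtain ⟨T, hT, hTV⟩ := (mem_filter.mp hN).2
              have hTne : T.Nonempty := card_pos.mp (lt_of_lt_of_le two_pos (hQ T hT))
              obtain ⟨j, hjT, hj⟩ := Finset.exists_mem_eq_inf' hTne a
              have haj : a j = 0 := by rw [← hj]; exact hδ T hT hTne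
              by_cases hji : j = i
              · rwa [hji] at haj
              · exfalso
                have hjV : j ∈ V₀ := by
                  by_contra hjV'
                  have hmem : j ∈ T \ V₀ := mem_sdiff.mpr ⟨hjT, hjV'⟩
                  rw [hTV, mem_singleton] at hmem
                  exact hji hmem
                rw [hV₀, mem_filter] at hjV
                exact hjV.2 haj
          unfold auxF
          rw [if_neg hiV, if_pos hiZ, if_pos hai, hai, pow_zero]
        · unfold auxF
          rw [if_neg hiV, if_neg hiZ]
    · rw [if_neg hδ, zero_mul]
      symm
      apply Finset.sum_eq_zero
      intro V hV
      by_contra hne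
      rw [h𝒱, mem_filter, mem_powerset] at hV
      have hVW : V ⊆ W := hV.1
      have hind : ∀ T ∈ Q, ¬ T ⊆ V := hV.2
      have hfact : ∀ i, auxF x V (Z V) i (a i) ≠ 0 := by
        intro i hi0
        exact hne (Finset.prod_eq_zero (mem_univ i) hi0)
      have hzero : ∀ i ∈ Z V, a i = 0 := by
        intro i hiZ
        have hiV : i ∉ V := hZV V hVW i hiZ
        by_contra hne'
        apply hfact i
        unfold auxF
        rw [if_neg hiV, if_pos hiZ, if_neg hne']
      apply hδ
      intro T hT hTne
      obtain ⟨j, hjT, hj0⟩ : ∃ j ∈ T, a j = 0 := by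
        by_cases hcase : ∃ j, j ∈ T ∧ j ∈ W ∧ j ∉ V
        · obtain ⟨j, hjT, hjW, hjV⟩ := hcase
          refine ⟨j, hjT, hzero j ?_⟩
          simp only [hZ]
          exact mem_union_left _ (mem_sdiff.mpr ⟨hjW, hjV⟩)
        · push_neg at hcase
          rcases (T \ W).eq_empty_or_nonempty with hTW | ⟨y, hy⟩
          · exfalso
            apply hind T hT
            intro j hjT
            have hjW : j ∈ W := by
              by_contra hjW'
              have : j ∈ T \ W := mem_sdiff.mpr ⟨hjT, hjW'⟩
              rw [hTW] at this
              exact absurd this (notMem_empty j)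
            exact hcase j hjT hjW
          · have hyW : y ∉ W := (mem_sdiff.mp hy).2
            have hyT : y ∈ T := (mem_sdiff.mp hy).1
            have hTV : T \ V = {y} := by
              apply Finset.Subset.antisymm
              · intro z hz
                rcases mem_sdiff.mp hz with ⟨hzT, hzV⟩
                by_cases hzW : z ∈ W
                · exact absurd (hcase z hzT hzW) hzV
                · have hz' : z ∈ T \ W := mem_sdiff.mpr ⟨hzT, hzW⟩
                  have := Finset.card_le_one.mp (hW T hT) _ hz' _ hy
                  rw [this]
                  exact mem_singleton_self y
              · intro z hz
                rw [mem_singleton] at hz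
                subst hz
                exact mem_sdiff.mpr ⟨hyT, fun h => hyW (hVW h)⟩
            have hyN : y ∈ Finset.univ.filter (fun w => ∃ T ∈ Q, T \ V = {w}) :=
              mem_filter.mpr ⟨mem_univ y, T, hT, hTV⟩
            refine ⟨y, hyT, hzero y ?_⟩
            simp only [hZ]
            exact mem_union_right _ (mem_sdiff.mpr ⟨hyN, hyW⟩)
      exact Nat.le_zero.mp (hj0 ▸ Finset.inf'_le a hjT)
  -- compute the tsum for each V
  have hVsum : ∀ V ∈ 𝒱, (∑' a : Fin k → ℕ, ∏ i, auxF x V (Z V) i (a i))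
      = (∏ i : Fin k, (1 - x i)⁻¹) *
        ((∏ v ∈ V, x v) * ∏ i ∈ Z V, (1 - x i)) := by
    intro V hV
    rw [h𝒱, mem_filter, mem_powerset] at hV
    have hVW : V ⊆ W := hV.1
    rw [(tsum_pi_prod k (fun i => auxF x V (Z V) i) (hFs V)).2]
    have : ∀ i : Fin k, (∑' m, auxF x V (Z V) i m)
        = (1 - x i)⁻¹ * (if i ∈ V then x i else if i ∈ Z V then (1 - x i) else 1) := by
      intro i
      by_cases hiV : i ∈ V
      · rw [htV V (Z V) i hiV, if_pos hiV, mul_comm]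
      · by_cases hiZ : i ∈ Z V
        · rw [htZ V (Z V) i hiV hiZ, if_neg hiV, if_pos hiZ,
            inv_mul_cancel₀ (hx1 i)]
        · rw [htF V (Z V) i hiV hiZ, if_neg hiV, if_neg hiZ, mul_one]
    rw [Finset.prod_congr rfl (fun i _ => this i), Finset.prod_mul_distrib]
    congr 1
    -- ∏ univ of the piecewise = ∏_V x * ∏_Z (1-x)
    have hdisj : Disjoint V (Z V) := by
      rw [Finset.disjoint_left]
      intro i hiV hiZ
      exact (hZV V hVW i hiZ) hiV
    have hsplit : (∏ i : Fin k, if i ∈ V then x i else if i ∈ Z V then (1 - x i) else 1)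
        = ∏ i ∈ V ∪ Z V, (if i ∈ V then x i else if i ∈ Z V then (1 - x i) else 1) := by
      symm
      apply Finset.prod_subset (Finset.subset_univ _)
      intro i _ hi
      rw [if_neg (fun h => hi (mem_union_left _ h)),
        if_neg (fun h => hi (mem_union_right _ h))]
    rw [hsplit, Finset.prod_union hdisj]
    congr 1
    · exact Finset.prod_congr rfl (fun i hi => if_pos hi)
    · exact Finset.prod_congr rfl (fun i hi => by
        rw [if_neg (hZV V hVW i hi), if_pos hi])
  -- assemble
  calc (∑' a : Fin k → ℕ,
        (if ∀ T ∈ Q, ∀ hTne : T.Nonempty, T.inf' hTne a = 0 then (1 : ℂ) else 0) *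
          (p : ℂ) ^ (-(∑ i, (a i : ℂ) * s i)))
      = ∑' a : Fin k → ℕ, ∑ V ∈ 𝒱, ∏ i, auxF x V (Z V) i (a i) := by
        apply tsum_congr
        intro a
        rw [hcpow a]
        exact key a
    _ = ∑ V ∈ 𝒱, ∑' a : Fin k → ℕ, ∏ i, auxF x V (Z V) i (a i) := by
        apply Summable.tsum_finsetSum
        intro V _
        exact ((tsum_pi_prod k (fun i => auxF x V (Z V) i) (hFs V)).1).of_norm
    _ = ∑ V ∈ 𝒱, (∏ i : Fin k, (1 - x i)⁻¹) *
          ((∏ v ∈ V, x v) * ∏ i ∈ Z V, (1 - x i)) :=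
        Finset.sum_congr rfl hVsum
    _ = (∏ i : Fin k, (1 - x i)⁻¹) *
          ∑ V ∈ 𝒱, (∏ v ∈ V, x v) * ∏ i ∈ Z V, (1 - x i) := by
        rw [Finset.mul_sum]
end

section
/- If G = (Q,f) is admissible and δ_{G_p}(p^{a_1},...,p^{a_k}) = 1, then a_i = v_i^(p) for every i in Z_p. -/
open scoped Classical

/-- if `G = (Q, f)` is admissible and
`δ_{G_p}(p^{a_1}, …, p^{a_k}) = 1` (i.e. `min {a_i : i ∈ T} = g_p(T)` for all
`T ∈ Q`), then `a_i = v_i^(p)` for every `i ∈ Z_p`. -/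
theorem stmt_15 (k : ℕ) (hk : 2 ≤ k)
    (Q : Finset (Finset (Fin k))) (hQ : ∀ T ∈ Q, 2 ≤ T.card)
    (f : Finset (Fin k) → ℕ) (hf : ∀ T ∈ Q, 0 < f T)
    (hadm : ∃ n : Fin k → ℕ, (∀ i, 0 < n i) ∧ ∀ T ∈ Q, T.gcd n = f T)
    (p : ℕ) (hp : p.Prime)
    (v : Fin k → ℕ)
    (hv : ∀ i : Fin k,
      v i = (Q.filter (fun T' => i ∈ T')).sup (fun T' => (f T').factorization p))
    (a : Fin k → ℕ)
    (hsat : ∀ T ∈ Q, ∀ hTne : T.Nonempty, T.inf' hTne a = (f T).factorization p)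
    (i : Fin k)
    (hi : ∃ T ∈ Q, i ∈ T ∧ ∀ j ∈ T, j ≠ i → (f T).factorization p < v j) :
    a i = v i := by
  have hav : ∀ j : Fin k, v j ≤ a j := by
    intro j
    rw [hv j]
    apply Finset.sup_le
    intro T' hT'
    rw [Finset.mem_filter] at hT'
    have hne : T'.Nonempty := ⟨j, hT'.2⟩
    rw [← hsat T' hT'.1 hne]
    exact Finset.inf'_le a hT'.2
  obtain ⟨T, hTQ, hiT, hlt⟩ := hi
  have hne : T.Nonempty := ⟨i, hiT⟩
  have hinf := hsat T hTQ hne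
  have hgle : (f T).factorization p ≤ v i := by
    rw [hv i]
    exact Finset.le_sup (f := fun T' => (f T').factorization p) (Finset.mem_filter.mpr ⟨hTQ, hiT⟩)
  obtain ⟨j0, hj0T, hj0⟩ := Finset.exists_mem_eq_inf' hne a
  have hji : j0 = i := by
    by_contra h
    have := hlt j0 hj0T h
    have := hav j0
    omega
  have hai : a i = (f T).factorization p := by rw [← hinf, hj0, hji]
  have := hav i
  omega
end

section
/- The error bound: for k ≥ 2 and f ≡ 1 on Q, with h = μ * δ_G, for any tuple (u_1,...,u_k) ∈ {0,1}^k with ∑ u_i < k, one has x^{∑ u_i} ∑_{d_1,...,d_k ≤ x} |h(d_1,...,d_k)| / (d_1^{u_1}···d_k^{u_k}) ≪ x^{k-1} (log x)^{k-1}. -/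
open Filter Asymptotics
open scoped Classical

set_option maxHeartbeats 1600000

/-- The coordinatewise Möbius convolution `h = μ * δ_G` for `f ≡ 1`. -/
noncomputable def hFun (k : ℕ) (Q : Finset (Finset (Fin k))) (n : Fin k → ℕ) : ℤ :=
  ∑ d ∈ Fintype.piFinset (fun i => (n i).divisors),
    (∏ i, ArithmeticFunction.moebius (n i / d i)) *
      (if ∀ T ∈ Q, T.gcd d = 1 then 1 else 0)

variable {k : ℕ}


lemma sum_moebius_divisors (m : ℕ) :
    ∑ t ∈ m.divisors, ArithmeticFunction.moebius t = if m = 1 then (1:ℤ) else 0 := by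
  have h1 : (ArithmeticFunction.moebius * ArithmeticFunction.zeta) m
      = ∑ t ∈ m.divisors, ArithmeticFunction.moebius t :=
    ArithmeticFunction.coe_mul_zeta_apply
  rw [ArithmeticFunction.moebius_mul_coe_zeta, ArithmeticFunction.one_apply] at h1
  exact h1.symm

lemma sum_moebius_filter (n L : ℕ) (hn : n ≠ 0) :
    ∑ e ∈ n.divisors, ArithmeticFunction.moebius (n / e) * (if L ∣ e then (1:ℤ) else 0)
      = if n = L then 1 else 0 := by
  simp_rw [mul_ite, mul_one, mul_zero, ← Finset.sum_filter]
  by_cases hL0 : L = 0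
  · subst hL0
    rw [Finset.filter_false_of_mem, Finset.sum_empty]
    · rw [if_neg]; omega
    · intro e he
      simp only [Nat.mem_divisors] at he
      have : e ≠ 0 := fun h => hn (by simpa [h] using he.1)
      simp [Nat.zero_dvd, this]
  by_cases hLn : L ∣ n
  · obtain ⟨m, rfl⟩ := hLn
    have hm : m ≠ 0 := by rintro rfl; simp at hn
    have key : ∑ e ∈ (L*m).divisors.filter (L ∣ ·), ArithmeticFunction.moebius (L * m / e)
        = ∑ c ∈ m.divisors, ArithmeticFunction.moebius (m / c) := by
      refine Finset.sum_bij' (i := fun e _ => e / L) (j := fun c _ => L * c) ?_ ?_ ?_ ?_ ?_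
      · intro e he
        simp only [Finset.mem_filter, Nat.mem_divisors] at he
        obtain ⟨⟨hd, _⟩, c, rfl⟩ := he
        simp only [Nat.mul_div_cancel_left c (Nat.pos_of_ne_zero hL0)]
        exact Nat.mem_divisors.2 ⟨(mul_dvd_mul_iff_left hL0).1 hd, hm⟩
      · intro c hc
        simp only [Nat.mem_divisors] at hc
        exact Finset.mem_filter.2 ⟨Nat.mem_divisors.2 ⟨mul_dvd_mul_left L hc.1, hn⟩,
          dvd_mul_right _ _⟩
      · intro e he
        simp only [Finset.mem_filter] at he
        obtain ⟨_, c, rfl⟩ := he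
        simp only [Nat.mul_div_cancel_left c (Nat.pos_of_ne_zero hL0)]
      · intro c hc
        simp only [Nat.mul_div_cancel_left c (Nat.pos_of_ne_zero hL0)]
      · intro e he
        simp only [Finset.mem_filter] at he
        obtain ⟨_, c, rfl⟩ := he
        simp only [Nat.mul_div_cancel_left c (Nat.pos_of_ne_zero hL0),
          Nat.mul_div_mul_left _ _ (Nat.pos_of_ne_zero hL0)]
    rw [key, Nat.sum_div_divisors, sum_moebius_divisors]
    congr 1
    simp only [eq_iff_iff]
    constructor
    · rintro rfl; simp
    · intro h
      nlinarith [Nat.pos_of_ne_zero hL0, Nat.pos_of_ne_zero hm, h]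
  · rw [Finset.filter_false_of_mem, Finset.sum_empty, if_neg]
    · rintro rfl; exact hLn dvd_rfl
    · intro e he hLe
      exact hLn (hLe.trans (Nat.mem_divisors.1 he).1)

noncomputable def LL (Q : Finset (Finset (Fin k))) (t : ↥Q → ℕ) (i : Fin k) : ℕ :=
  (Finset.univ.filter fun T : ↥Q => i ∈ (T : Finset (Fin k))).lcm t

lemma LL_dvd_iff (Q : Finset (Finset (Fin k))) (t : ↥Q → ℕ) (d : Fin k → ℕ) :
    (∀ i, LL Q t i ∣ d i) ↔ ∀ T : ↥Q, ∀ i ∈ (T : Finset (Fin k)), t T ∣ d i := by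
  constructor
  · intro h T i hiT
    exact (Finset.dvd_lcm (by simp [hiT])).trans (h i)
  · intro h i
    exact Finset.lcm_dvd fun T hT => h T i (by simpa using hT)

lemma hFun_eq (Q : Finset (Finset (Fin k))) (hQne : ∀ T ∈ Q, T.Nonempty)
    (n : Fin k → ℕ) (hn : ∀ i, n i ≠ 0) :
    hFun k Q n = ∑ t ∈ Fintype.piFinset (fun _ : ↥Q => (∏ i, n i).divisors),
      (∏ T : ↥Q, ArithmeticFunction.moebius (t T)) *
        (if ∀ i, LL Q t i = n i then 1 else 0) := by
  classical
  set P := ∏ i, n i with hP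
  have hP0 : P ≠ 0 := Finset.prod_ne_zero_iff.2 fun i _ => hn i
  have step1 : ∀ d ∈ Fintype.piFinset (fun i => (n i).divisors),
      (if ∀ T ∈ Q, T.gcd d = 1 then (1:ℤ) else 0)
      = ∑ t ∈ Fintype.piFinset (fun _ : ↥Q => P.divisors),
          ∏ T : ↥Q, (if ∀ i ∈ (T : Finset (Fin k)), t T ∣ d i
            then ArithmeticFunction.moebius (t T) else 0) := by
    intro d hd
    have hd' : ∀ i, d i ∣ n i ∧ d i ≠ 0 := by
      intro i
      have h := Fintype.mem_piFinset.1 hd i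
      rw [Nat.mem_divisors] at h
      refine ⟨h.1, fun h0 => hn i ?_⟩
      have h1 := h.1; rw [h0] at h1; exact Nat.eq_zero_of_zero_dvd h1
    have e0 : (if ∀ T ∈ Q, T.gcd d = 1 then (1:ℤ) else 0)
        = ∏ T ∈ Q, (if T.gcd d = 1 then (1:ℤ) else 0) := by
      by_cases h : ∀ T ∈ Q, T.gcd d = 1
      · rw [if_pos h]
        exact (Finset.prod_eq_one fun T hT => if_pos (h T hT)).symm
      · rw [if_neg h]
        push_neg at h
        obtain ⟨T0, hT0m, hg⟩ := h
        exact (Finset.prod_eq_zero hT0m (by rw [if_neg hg])).symm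
    have e1 : ∀ T : ↥Q, (if (T : Finset (Fin k)).gcd d = 1 then (1:ℤ) else 0)
        = ∑ a ∈ P.divisors, (if ∀ i ∈ (T : Finset (Fin k)), a ∣ d i
            then ArithmeticFunction.moebius a else 0) := by
      intro T
      have hset : ((T : Finset (Fin k)).gcd d).divisors
          = P.divisors.filter (fun t => ∀ i ∈ (T : Finset (Fin k)), t ∣ d i) := by
        ext a
        simp only [Nat.mem_divisors, Finset.mem_filter]
        constructor
        · intro ⟨hdv, hnz⟩
          have hall : ∀ i ∈ (T : Finset (Fin k)), a ∣ d i :=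
            fun i hi => hdv.trans (Finset.gcd_dvd hi)
          obtain ⟨i0, hi0⟩ := hQne T T.2
          exact ⟨⟨(hall i0 hi0).trans ((hd' i0).1.trans
            (Finset.dvd_prod_of_mem n (Finset.mem_univ i0))), hP0⟩, hall⟩
        · intro ⟨⟨_, _⟩, hall⟩
          refine ⟨Finset.dvd_gcd hall, ?_⟩
          obtain ⟨i0, hi0⟩ := hQne T T.2
          intro h0
          rw [Finset.gcd_eq_zero_iff] at h0
          exact (hd' i0).2 (h0 i0 hi0)
      rw [← sum_moebius_divisors, hset, Finset.sum_filter]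
    rw [e0, ← Finset.prod_attach Q fun T => (if T.gcd d = 1 then (1:ℤ) else 0)]
    calc ∏ T ∈ Q.attach, (if (T : Finset (Fin k)).gcd d = 1 then (1:ℤ) else 0)
        = ∏ T : ↥Q, ∑ a ∈ P.divisors, (if ∀ i ∈ (T : Finset (Fin k)), a ∣ d i
            then ArithmeticFunction.moebius a else 0) := by
          rw [← Finset.univ_eq_attach]
          exact Finset.prod_congr rfl fun T _ => e1 T
      _ = _ := Finset.prod_univ_sum (fun _ : ↥Q => P.divisors)
            (fun T a => if ∀ i ∈ (T : Finset (Fin k)), a ∣ d i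
              then ArithmeticFunction.moebius a else 0)
  unfold hFun
  calc ∑ d ∈ Fintype.piFinset (fun i => (n i).divisors),
        (∏ i, ArithmeticFunction.moebius (n i / d i)) *
          (if ∀ T ∈ Q, T.gcd d = 1 then 1 else 0)
      = ∑ d ∈ Fintype.piFinset (fun i => (n i).divisors),
          ∑ t ∈ Fintype.piFinset (fun _ : ↥Q => P.divisors),
          (∏ i, ArithmeticFunction.moebius (n i / d i)) *
            ∏ T : ↥Q, (if ∀ i ∈ (T : Finset (Fin k)), t T ∣ d i
              then ArithmeticFunction.moebius (t T) else 0) := by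
        refine Finset.sum_congr rfl fun d hd => ?_
        rw [step1 d hd, Finset.mul_sum]
    _ = ∑ t ∈ Fintype.piFinset (fun _ : ↥Q => P.divisors),
          ∑ d ∈ Fintype.piFinset (fun i => (n i).divisors),
          (∏ i, ArithmeticFunction.moebius (n i / d i)) *
            ∏ T : ↥Q, (if ∀ i ∈ (T : Finset (Fin k)), t T ∣ d i
              then ArithmeticFunction.moebius (t T) else 0) := Finset.sum_comm
    _ = ∑ t ∈ Fintype.piFinset (fun _ : ↥Q => P.divisors),
          (∏ T : ↥Q, ArithmeticFunction.moebius (t T)) *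
            (if ∀ i, LL Q t i = n i then 1 else 0) := by
        refine Finset.sum_congr rfl fun t _ => ?_
        set B := ∏ T : ↥Q, ArithmeticFunction.moebius (t T) with hB
        set F : (Fin k → ℕ) → ℤ := fun d => if ∀ i, LL Q t i ∣ d i then 1 else 0 with hF
        have h2 : ∀ d : Fin k → ℕ,
            (∏ T : ↥Q, (if ∀ i ∈ (T : Finset (Fin k)), t T ∣ d i
              then ArithmeticFunction.moebius (t T) else 0)) = B * F d := by
          intro d
          have e1 : ∀ T : ↥Q, (if ∀ i ∈ (T : Finset (Fin k)), t T ∣ d i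
              then ArithmeticFunction.moebius (t T) else 0)
              = ArithmeticFunction.moebius (t T) *
                (if ∀ i ∈ (T : Finset (Fin k)), t T ∣ d i then 1 else 0) := by
            intro T; split <;> simp
          simp_rw [e1]
          rw [Finset.prod_mul_distrib]
          congr 1
          show _ = F d
          by_cases hc : ∀ i, LL Q t i ∣ d i
          · have h1 := (LL_dvd_iff Q t d).1 hc
            have : F d = 1 := if_pos hc
            rw [this]
            exact Finset.prod_eq_one fun T _ => if_pos (h1 T)
          · have : F d = 0 := if_neg hc
            rw [this]
            have h1 : ¬ ∀ T : ↥Q, ∀ i ∈ (T : Finset (Fin k)), t T ∣ d i :=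
              fun h => hc ((LL_dvd_iff Q t d).2 h)
            obtain ⟨T0, hT0⟩ := not_forall.1 h1
            exact Finset.prod_eq_zero (Finset.mem_univ T0) (if_neg hT0)
        have inner : ∑ d ∈ Fintype.piFinset (fun i => (n i).divisors),
            (∏ i, ArithmeticFunction.moebius (n i / d i)) * F d
            = (if ∀ i, LL Q t i = n i then (1:ℤ) else 0) := by
          calc ∑ d ∈ Fintype.piFinset (fun i => (n i).divisors),
              (∏ i, ArithmeticFunction.moebius (n i / d i)) * F d
              = ∑ d ∈ Fintype.piFinset (fun i => (n i).divisors),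
                ∏ i, (ArithmeticFunction.moebius (n i / d i) *
                  (if LL Q t i ∣ d i then 1 else 0)) := by
                refine Finset.sum_congr rfl fun d _ => ?_
                rw [Finset.prod_mul_distrib]
                congr 1
                show F d = _
                by_cases hc : ∀ i, LL Q t i ∣ d i
                · have h1 : F d = 1 := if_pos hc
                  rw [h1]
                  exact (Finset.prod_eq_one fun i _ => if_pos (hc i)).symm
                · have h1 : F d = 0 := if_neg hc
                  rw [h1]
                  obtain ⟨i0, h0⟩ := not_forall.1 hc
                  exact (Finset.prod_eq_zero (Finset.mem_univ i0) (by rw [if_neg h0])).symm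
            _ = ∏ i, ∑ e ∈ (n i).divisors,
                  (ArithmeticFunction.moebius (n i / e) * (if LL Q t i ∣ e then 1 else 0)) :=
                (Finset.prod_univ_sum (fun i => (n i).divisors)
                  (fun i e => ArithmeticFunction.moebius (n i / e) *
                    (if LL Q t i ∣ e then 1 else 0))).symm
            _ = ∏ i, (if n i = LL Q t i then (1:ℤ) else 0) :=
                Finset.prod_congr rfl fun i _ => sum_moebius_filter _ _ (hn i)
            _ = (if ∀ i, LL Q t i = n i then 1 else 0) := by
                by_cases hc : ∀ i, LL Q t i = n i
                · rw [if_pos hc]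
                  exact Finset.prod_eq_one fun i _ => if_pos (hc i).symm
                · rw [if_neg hc]
                  obtain ⟨i0, h0⟩ := not_forall.1 hc
                  exact Finset.prod_eq_zero (Finset.mem_univ i0)
                    (by rw [if_neg fun h => h0 h.symm])
        calc ∑ d ∈ Fintype.piFinset (fun i => (n i).divisors),
            (∏ i, ArithmeticFunction.moebius (n i / d i)) *
              ∏ T : ↥Q, (if ∀ i ∈ (T : Finset (Fin k)), t T ∣ d i
                then ArithmeticFunction.moebius (t T) else 0)
            = ∑ d ∈ Fintype.piFinset (fun i => (n i).divisors),
              B * ((∏ i, ArithmeticFunction.moebius (n i / d i)) * F d) :=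
              Finset.sum_congr rfl fun d _ => by rw [h2 d]; ring
          _ = B * ∑ d ∈ Fintype.piFinset (fun i => (n i).divisors),
              (∏ i, ArithmeticFunction.moebius (n i / d i)) * F d := by
              rw [Finset.mul_sum]
          _ = B * (if ∀ i, LL Q t i = n i then 1 else 0) := by rw [inner]

lemma harm_le (N : ℕ) : ∑ x ∈ Finset.Icc 1 N, (x:ℝ)⁻¹ ≤ 1 + Real.log N := by
  induction N with
  | zero => simp
  | succ n ih =>
    rcases Nat.eq_zero_or_pos n with rfl | hn
    · norm_num
    rw [Finset.sum_Icc_succ_top (by omega : 1 ≤ n + 1)]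
    have hlog : (↑(n+1) : ℝ)⁻¹ + Real.log n ≤ Real.log (n+1) := by
      have h1 : Real.log ((n:ℝ) / (n+1)) ≤ (n:ℝ)/(n+1) - 1 :=
        Real.log_le_sub_one_of_pos (by positivity)
      rw [Real.log_div (by positivity) (by positivity)] at h1
      have h2 : (n:ℝ)/(n+1) - 1 = -((n:ℝ)+1)⁻¹ := by field_simp; ring
      push_cast
      nlinarith [h1, h2]
    have hmono : Real.log n ≤ Real.log (n+1) := by
      apply Real.log_le_log (by positivity) (by push_cast; linarith)
    push_cast at hlog ⊢
    linarith
lemma invsq_le (N : ℕ) (e : ℕ) (he : 2 ≤ e) :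
    ∑ x ∈ Finset.Icc 1 N, ((x:ℝ) ^ e)⁻¹ ≤ 2 := by
  have step1 : ∑ x ∈ Finset.Icc 1 N, ((x:ℝ) ^ e)⁻¹ ≤ ∑ x ∈ Finset.Icc 1 N, ((x:ℝ)^2)⁻¹ := by
    refine Finset.sum_le_sum fun x hx => ?_
    have hx1 : (1:ℝ) ≤ (x:ℝ) := by
      have := (Finset.mem_Icc.1 hx).1; exact_mod_cast this
    have h1 : (x:ℝ)^2 ≤ (x:ℝ)^e := pow_le_pow_right₀ hx1 he
    exact inv_anti₀ (by positivity) h1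
  refine step1.trans ?_
  have key : ∀ N : ℕ, 1 ≤ N → ∑ x ∈ Finset.Icc 1 N, ((x:ℝ)^2)⁻¹ ≤ 2 - (N:ℝ)⁻¹ := by
    intro N hN
    induction N with
    | zero => omega
    | succ n ih =>
      rcases Nat.eq_zero_or_pos n with rfl | hn
      · norm_num
      rw [Finset.sum_Icc_succ_top (by omega : 1 ≤ n + 1)]
      have h1 := ih hn
      have h2 : ((↑(n+1):ℝ)^2)⁻¹ ≤ (n:ℝ)⁻¹ - (↑(n+1):ℝ)⁻¹ := by
        have hn1 : (0:ℝ) < n := by exact_mod_cast hn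
        have h3 : (n:ℝ)⁻¹ - ((n:ℝ)+1)⁻¹ = ((n:ℝ)*((n:ℝ)+1))⁻¹ := by
          field_simp; ring
        push_cast
        rw [h3]
        apply inv_anti₀ (by positivity)
        nlinarith
      push_cast at h1 h2 ⊢
      linarith
  rcases Nat.eq_zero_or_pos N with rfl | hN
  · simp
  refine (key N hN).trans ?_
  have : (0:ℝ) ≤ (N:ℝ)⁻¹ := by positivity
  linarith



noncomputable def cset (Q : Finset (Finset (Fin k))) (t : ↥Q → ℕ) (p : ℕ) : Finset ↥Q :=
  Finset.univ.filter (fun T => p ∣ t T)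

noncomputable def psi (Q : Finset (Finset (Fin k))) (t : ↥Q → ℕ) (S : Finset ↥Q) : ℕ :=
  ∏ p ∈ (∏ T : ↥Q, t T).primeFactors.filter (fun p => cset Q t p = S), p

lemma psi_prod (Q : Finset (Finset (Fin k))) (t : ↥Q → ℕ) (P : Finset ↥Q → Prop)
    [DecidablePred P] :
    ∏ S ∈ Finset.univ.filter (fun S => P S), psi Q t S
      = ∏ p ∈ (∏ T : ↥Q, t T).primeFactors.filter (fun p => P (cset Q t p)), p := by
  rw [← Finset.prod_fiberwise_of_maps_to (g := cset Q t)
      (t := Finset.univ.filter (fun S => P S))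
      (s := (∏ T : ↥Q, t T).primeFactors.filter (fun p => P (cset Q t p)))
      (fun p hp => by
        simp only [Finset.mem_filter] at hp
        exact Finset.mem_filter.2 ⟨Finset.mem_univ _, hp.2⟩) (fun p => p)]
  refine Finset.prod_congr rfl fun S hS => ?_
  have hPS : P S := (Finset.mem_filter.1 hS).2
  unfold psi
  congr 1
  rw [Finset.filter_filter]
  ext p
  simp only [Finset.mem_filter]
  constructor
  · rintro ⟨hA, hc⟩
    exact ⟨hA, by rw [hc]; exact hPS, hc⟩
  · rintro ⟨hA, _, hc⟩
    exact ⟨hA, hc⟩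

lemma t_eq_prod (Q : Finset (Finset (Fin k))) (t : ↥Q → ℕ) (ht0 : ∀ T, t T ≠ 0)
    (hsf : ∀ T, Squarefree (t T)) (T : ↥Q) :
    t T = ∏ S ∈ Finset.univ.filter (fun S : Finset ↥Q => T ∈ S), psi Q t S := by
  rw [psi_prod]
  have hbig : (∏ T' : ↥Q, t T') ≠ 0 := Finset.prod_ne_zero_iff.2 fun T' _ => ht0 T'
  have hset : (∏ T' : ↥Q, t T').primeFactors.filter (fun p => T ∈ cset Q t p)
      = (t T).primeFactors := by
    ext p
    simp only [Finset.mem_filter, Nat.mem_primeFactors, cset, Finset.mem_univ, true_and]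
    constructor
    · rintro ⟨⟨hp, _, _⟩, hdvd⟩
      exact ⟨hp, hdvd, ht0 T⟩
    · rintro ⟨hp, hdvd, _⟩
      exact ⟨⟨hp, hdvd.trans (Finset.dvd_prod_of_mem _ (Finset.mem_univ T)), hbig⟩, hdvd⟩
  rw [hset, Nat.prod_primeFactors_of_squarefree (hsf T)]

lemma LL_eq_prod (Q : Finset (Finset (Fin k))) (t : ↥Q → ℕ) (ht0 : ∀ T, t T ≠ 0)
    (hsf : ∀ T, Squarefree (t T)) (i : Fin k) :
    LL Q t i = ∏ S ∈ Finset.univ.filter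
        (fun S : Finset ↥Q => ∃ T ∈ S, i ∈ (T : Finset (Fin k))), psi Q t S := by
  rw [psi_prod]
  have hbig : (∏ T' : ↥Q, t T') ≠ 0 := Finset.prod_ne_zero_iff.2 fun T' _ => ht0 T'
  apply Nat.dvd_antisymm
  · apply Finset.lcm_dvd
    intro T hT
    have hiT : i ∈ (T : Finset (Fin k)) := by simpa using hT
    conv_lhs => rw [← Nat.prod_primeFactors_of_squarefree (hsf T)]
    apply Finset.prod_dvd_prod_of_subset
    intro p hp
    rw [Nat.mem_primeFactors] at hp
    obtain ⟨hp1, hp2, _⟩ := hp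
    refine Finset.mem_filter.2 ⟨Nat.mem_primeFactors.2
      ⟨hp1, hp2.trans (Finset.dvd_prod_of_mem _ (Finset.mem_univ T)), hbig⟩, ?_⟩
    exact ⟨T, by simp [cset, hp2], hiT⟩
  · apply Finset.prod_primes_dvd
    · intro p hp
      simp only [Finset.mem_filter, Nat.mem_primeFactors] at hp
      exact hp.1.1.prime
    · intro p hp
      simp only [Finset.mem_filter, Nat.mem_primeFactors] at hp
      obtain ⟨_, T, hTc, hiT⟩ := hp
      have hpT : p ∣ t T := by
        have := hTc
        simp only [cset, Finset.mem_filter] at this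
        exact this.2
      exact hpT.trans (Finset.dvd_lcm (by simp [hiT]))

noncomputable def WW (Q : Finset (Finset (Fin k))) (j : Fin k) (S : Finset ↥Q) :
    Finset (Fin k) :=
  (Finset.univ.erase j).filter (fun i => ∃ T ∈ S, i ∈ (T : Finset (Fin k)))

noncomputable def eE (Q : Finset (Finset (Fin k))) (j : Fin k) (S : Finset ↥Q) : ℕ :=
  (WW Q j S).card

lemma prod_LL_eq (Q : Finset (Finset (Fin k))) (t : ↥Q → ℕ) (ht0 : ∀ T, t T ≠ 0)
    (hsf : ∀ T, Squarefree (t T)) (j : Fin k) :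
    ∏ i ∈ Finset.univ.erase j, LL Q t i = ∏ S : Finset ↥Q, psi Q t S ^ eE Q j S := by
  calc ∏ i ∈ Finset.univ.erase j, LL Q t i
      = ∏ i ∈ Finset.univ.erase j, ∏ S ∈ Finset.univ.filter
          (fun S : Finset ↥Q => ∃ T ∈ S, i ∈ (T : Finset (Fin k))), psi Q t S :=
        Finset.prod_congr rfl fun i _ => LL_eq_prod Q t ht0 hsf i
    _ = ∏ i ∈ Finset.univ.erase j, ∏ S : Finset ↥Q,
          (if ∃ T ∈ S, i ∈ (T : Finset (Fin k)) then psi Q t S else 1) := by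
        refine Finset.prod_congr rfl fun i _ => ?_
        rw [Finset.prod_filter]
    _ = ∏ S : Finset ↥Q, ∏ i ∈ Finset.univ.erase j,
          (if ∃ T ∈ S, i ∈ (T : Finset (Fin k)) then psi Q t S else 1) := Finset.prod_comm
    _ = ∏ S : Finset ↥Q, psi Q t S ^ eE Q j S := by
        refine Finset.prod_congr rfl fun S _ => ?_
        rw [← Finset.prod_filter, Finset.prod_const]
        rfl

lemma psi_empty (Q : Finset (Finset (Fin k))) (t : ↥Q → ℕ) : psi Q t ∅ = 1 := by
  unfold psi
  rw [Finset.filter_false_of_mem, Finset.prod_empty]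
  intro p hp
  rw [Nat.mem_primeFactors] at hp
  obtain ⟨hp1, hp2, _⟩ := hp
  obtain ⟨T, _, hpT⟩ := hp1.prime.exists_mem_finset_dvd hp2
  intro hc
  have hmem : T ∈ cset Q t p := by simp [cset, hpT]
  rw [hc] at hmem
  exact absurd hmem (Finset.notMem_empty T)

lemma psi_pos (Q : Finset (Finset (Fin k))) (t : ↥Q → ℕ) (S : Finset ↥Q) :
    1 ≤ psi Q t S := by
  unfold psi
  show 0 < _
  apply Finset.prod_pos
  intro p hp
  exact (Nat.prime_of_mem_primeFactors (Finset.mem_filter.1 hp).1).pos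

lemma psi_dvd (Q : Finset (Finset (Fin k))) (t : ↥Q → ℕ) (ht0 : ∀ T, t T ≠ 0)
    (hsf : ∀ T, Squarefree (t T)) (S : Finset ↥Q) (T : ↥Q) (hT : T ∈ S) :
    psi Q t S ∣ t T := by
  unfold psi
  conv_rhs => rw [← Nat.prod_primeFactors_of_squarefree (hsf T)]
  apply Finset.prod_dvd_prod_of_subset
  intro p hp
  simp only [Finset.mem_filter] at hp
  obtain ⟨hpA, hc⟩ := hp
  have hpT : p ∣ t T := by
    have hm : T ∈ cset Q t p := hc ▸ hT
    simpa [cset] using hm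
  exact Nat.mem_primeFactors.2 ⟨Nat.prime_of_mem_primeFactors hpA, hpT, ht0 T⟩

lemma eE_pos (Q : Finset (Finset (Fin k))) (hQ2 : ∀ T ∈ Q, 2 ≤ T.card) (j : Fin k)
    (S : Finset ↥Q) (hS : S.Nonempty) : 1 ≤ eE Q j S := by
  obtain ⟨T0, hT0⟩ := hS
  have hc : 2 ≤ (T0 : Finset (Fin k)).card := hQ2 _ T0.2
  have hne : ((T0 : Finset (Fin k)).erase j).Nonempty := by
    rw [← Finset.card_pos]
    by_cases hj : j ∈ (T0 : Finset (Fin k))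
    · rw [Finset.card_erase_of_mem hj]; omega
    · rw [Finset.erase_eq_of_notMem hj]; omega
  obtain ⟨i, hi⟩ := hne
  rw [Finset.mem_erase] at hi
  apply Finset.card_pos.2
  exact ⟨i, Finset.mem_filter.2 ⟨Finset.mem_erase.2 ⟨hi.1, Finset.mem_univ _⟩,
    ⟨T0, hT0, hi.2⟩⟩⟩

lemma E1_card (Q : Finset (Finset (Fin k))) (hQ2 : ∀ T ∈ Q, 2 ≤ T.card) (j : Fin k) :
    ((Finset.univ : Finset (Finset ↥Q)).filter
       (fun S => S.Nonempty ∧ eE Q j S = 1)).card ≤ k - 1 := by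
  classical
  have fwd : ∀ S ∈ (Finset.univ : Finset (Finset ↥Q)).filter
      (fun S => S.Nonempty ∧ eE Q j S = 1),
      ∀ T : ↥Q, T ∈ S → (T : Finset (Fin k)) = insert j (WW Q j S) := by
    intro S hS T hTS
    obtain ⟨hne, he1⟩ := (Finset.mem_filter.1 hS).2
    apply Finset.eq_of_subset_of_card_le
    · intro x hx
      by_cases hxj : x = j
      · exact hxj ▸ Finset.mem_insert_self _ _
      · refine Finset.mem_insert_of_mem ?_
        exact Finset.mem_filter.2 ⟨Finset.mem_erase.2 ⟨hxj, Finset.mem_univ _⟩, ⟨T, hTS, hx⟩⟩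
    · calc (insert j (WW Q j S)).card ≤ (WW Q j S).card + 1 := Finset.card_insert_le _ _
        _ = 2 := by rw [show (WW Q j S).card = eE Q j S from rfl, he1]
        _ ≤ (T : Finset (Fin k)).card := hQ2 _ T.2
  refine (Finset.card_le_card_of_injOn (t := (Finset.univ.erase j).powersetCard 1)
      (fun S => WW Q j S) ?_ ?_).trans ?_
  · intro S hS
    obtain ⟨hne, he1⟩ := (Finset.mem_filter.1 hS).2
    exact Finset.mem_powersetCard.2 ⟨Finset.filter_subset _ _, he1⟩
  · intro S1 h1 S2 h2 hW
    simp only [Finset.mem_coe] at h1 h2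
    have key : ∀ S1' S2', S1' ∈ (Finset.univ : Finset (Finset ↥Q)).filter
        (fun S => S.Nonempty ∧ eE Q j S = 1) →
        S2' ∈ (Finset.univ : Finset (Finset ↥Q)).filter
        (fun S => S.Nonempty ∧ eE Q j S = 1) →
        WW Q j S1' = WW Q j S2' → ∀ T : ↥Q, T ∈ S1' → T ∈ S2' := by
      intro S1' S2' h1' h2' hW' T hT
      obtain ⟨T2, hT2⟩ := ((Finset.mem_filter.1 h2').2).1
      have e1 := fwd S1' h1' T hT
      have e2 := fwd S2' h2' T2 hT2
      rw [hW'] at e1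
      have : T = T2 := Subtype.ext (by rw [e1, e2])
      rwa [this]
    ext T
    exact ⟨key S1 S2 h1 h2 hW T, key S2 S1 h2 h1 hW.symm T⟩
  · rw [Finset.card_powersetCard, Finset.card_erase_of_mem (Finset.mem_univ j),
      Finset.card_univ, Fintype.card_fin, Nat.choose_one_right]

lemma Tsum_le (Q : Finset (Finset (Fin k))) (hQ2 : ∀ T ∈ Q, 2 ≤ T.card) (j : Fin k)
    (N : ℕ) (hN : 1 ≤ N) :
    ∑ t ∈ (Fintype.piFinset (fun _ : ↥Q => Finset.Icc 1 N)).filter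
        (fun t => ∀ T, Squarefree (t T)),
      ∏ i ∈ Finset.univ.erase j, (LL Q t i : ℝ)⁻¹
    ≤ (2:ℝ) ^ (2 ^ Q.card) * (1 + Real.log N) ^ (k - 1) := by
  classical
  set sfT := (Fintype.piFinset (fun _ : ↥Q => Finset.Icc 1 N)).filter
      (fun t => ∀ T, Squarefree (t T)) with hsfT
  have hmem : ∀ t ∈ sfT, (∀ T : ↥Q, 1 ≤ t T ∧ t T ≤ N) ∧ ∀ T, Squarefree (t T) := by
    intro t ht
    rw [hsfT, Finset.mem_filter] at ht
    exact ⟨fun T => Finset.mem_Icc.1 (Fintype.mem_piFinset.1 ht.1 T), ht.2⟩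
  set MBox := Fintype.piFinset (fun S : Finset ↥Q =>
      if S = ∅ then ({1} : Finset ℕ) else Finset.Icc 1 N) with hMBox
  set G : (Finset ↥Q → ℕ) → ℝ := fun m => ∏ S : Finset ↥Q, ((m S : ℝ) ^ eE Q j S)⁻¹ with hG
  have hGnonneg : ∀ m, 0 ≤ G m := fun m => Finset.prod_nonneg fun S _ => by positivity
  have step1 : ∀ t ∈ sfT, ∏ i ∈ Finset.univ.erase j, (LL Q t i : ℝ)⁻¹ = G (psi Q t) := by
    intro t ht
    obtain ⟨hb, hsf⟩ := hmem t ht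
    have ht0 : ∀ T, t T ≠ 0 := fun T => by have := (hb T).1; omega
    have hnat := prod_LL_eq Q t ht0 hsf j
    have hcast : (∏ i ∈ Finset.univ.erase j, (LL Q t i : ℝ))
        = ∏ S : Finset ↥Q, (psi Q t S : ℝ) ^ eE Q j S := by
      have hc := congrArg (fun z : ℕ => (z : ℝ)) hnat
      push_cast at hc
      exact hc
    calc ∏ i ∈ Finset.univ.erase j, (LL Q t i : ℝ)⁻¹
        = (∏ i ∈ Finset.univ.erase j, (LL Q t i : ℝ))⁻¹ := Finset.prod_inv_distrib _
      _ = (∏ S : Finset ↥Q, (psi Q t S : ℝ) ^ eE Q j S)⁻¹ := by rw [hcast]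
      _ = G (psi Q t) := (Finset.prod_inv_distrib _).symm
  have hinj : ∀ t1 ∈ sfT, ∀ t2 ∈ sfT, psi Q t1 = psi Q t2 → t1 = t2 := by
    intro t1 h1 t2 h2 hpsi
    obtain ⟨hb1, hsf1⟩ := hmem t1 h1
    obtain ⟨hb2, hsf2⟩ := hmem t2 h2
    have ht01 : ∀ T, t1 T ≠ 0 := fun T => by have := (hb1 T).1; omega
    have ht02 : ∀ T, t2 T ≠ 0 := fun T => by have := (hb2 T).1; omega
    funext T
    rw [t_eq_prod Q t1 ht01 hsf1 T, t_eq_prod Q t2 ht02 hsf2 T]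
    exact Finset.prod_congr rfl fun S _ => by rw [hpsi]
  have hmaps : ∀ t ∈ sfT, psi Q t ∈ MBox := by
    intro t ht
    obtain ⟨hb, hsf⟩ := hmem t ht
    have ht0 : ∀ T, t T ≠ 0 := fun T => by have := (hb T).1; omega
    rw [hMBox, Fintype.mem_piFinset]
    intro S
    by_cases hSe : S = ∅
    · rw [if_pos hSe, hSe, psi_empty Q t]
      exact Finset.mem_singleton_self 1
    · rw [if_neg hSe]
      obtain ⟨T0, hT0⟩ := Finset.nonempty_iff_ne_empty.2 hSe
      have hdvd := psi_dvd Q t ht0 hsf S T0 hT0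
      refine Finset.mem_Icc.2 ⟨psi_pos Q t S,
        (Nat.le_of_dvd (Nat.pos_of_ne_zero (ht0 T0)) hdvd).trans (hb T0).2⟩
  have hlogpos : (0:ℝ) ≤ Real.log N :=
    Real.log_nonneg (by exact_mod_cast hN)
  calc ∑ t ∈ sfT, ∏ i ∈ Finset.univ.erase j, (LL Q t i : ℝ)⁻¹
      = ∑ t ∈ sfT, G (psi Q t) := Finset.sum_congr rfl step1
    _ = ∑ m ∈ sfT.image (psi Q), G m := (Finset.sum_image hinj).symm
    _ ≤ ∑ m ∈ MBox, G m := by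
        refine Finset.sum_le_sum_of_subset_of_nonneg ?_ (fun m _ _ => hGnonneg m)
        intro m hm
        obtain ⟨t, ht, rfl⟩ := Finset.mem_image.1 hm
        exact hmaps t ht
    _ = ∏ S : Finset ↥Q, ∑ x ∈ (if S = ∅ then ({1} : Finset ℕ) else Finset.Icc 1 N),
          ((x : ℝ) ^ eE Q j S)⁻¹ := by
        rw [hMBox, hG]
        exact (Finset.prod_univ_sum
          (fun S : Finset ↥Q => if S = ∅ then ({1} : Finset ℕ) else Finset.Icc 1 N)
          (fun S x => ((x : ℝ) ^ eE Q j S)⁻¹)).symm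
    _ ≤ ∏ S : Finset ↥Q,
          (if S = ∅ then (1:ℝ) else if eE Q j S = 1 then 1 + Real.log N else 2) := by
        refine Finset.prod_le_prod (fun S _ => Finset.sum_nonneg fun x _ => by positivity)
          (fun S _ => ?_)
        by_cases hSe : S = ∅
        · rw [if_pos hSe, if_pos hSe]
          simp
        · rw [if_neg hSe, if_neg hSe]
          by_cases he1 : eE Q j S = 1
          · rw [if_pos he1, he1]
            simpa [pow_one] using harm_le N
          · rw [if_neg he1]
            have he2 : 2 ≤ eE Q j S := by
              have := eE_pos Q hQ2 j S (Finset.nonempty_iff_ne_empty.2 hSe)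
              omega
            exact invsq_le N _ he2
    _ ≤ (2:ℝ) ^ (2 ^ Q.card) * (1 + Real.log N) ^ (k - 1) := by
        set p : Finset ↥Q → Prop := fun S => S.Nonempty ∧ eE Q j S = 1 with hp
        set c : Finset ↥Q → ℝ := fun S =>
          (if S = ∅ then (1:ℝ) else if eE Q j S = 1 then 1 + Real.log N else 2) with hc
        have hsplit : ∏ S : Finset ↥Q, c S
            = (∏ S ∈ Finset.univ.filter p, c S) *
              ∏ S ∈ Finset.univ.filter (fun S => ¬ p S), c S :=
          (Finset.prod_filter_mul_prod_filter_not Finset.univ p c).symm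
        have h1 : ∏ S ∈ Finset.univ.filter p, c S
            = (1 + Real.log N) ^ (Finset.univ.filter p).card := by
          rw [← Finset.prod_const]
          refine Finset.prod_congr rfl fun S hS => ?_
          obtain ⟨hne, he1⟩ := (Finset.mem_filter.1 hS).2
          rw [hc]
          simp only
          rw [if_neg (Finset.nonempty_iff_ne_empty.1 hne), if_pos he1]
        have h2 : ∏ S ∈ Finset.univ.filter (fun S => ¬ p S), c S
            ≤ 2 ^ (Finset.univ.filter (fun S => ¬ p S)).card := by
          rw [← Finset.prod_const]
          refine Finset.prod_le_prod (fun S _ => ?_) (fun S hS => ?_)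
          · rw [hc]; simp only
            split
            · norm_num
            · split
              · linarith
              · norm_num
          · have hnp := (Finset.mem_filter.1 hS).2
            rw [hc]; simp only
            by_cases hSe : S = ∅
            · rw [if_pos hSe]; norm_num
            · rw [if_neg hSe]
              have : ¬ eE Q j S = 1 := fun h =>
                hnp ⟨Finset.nonempty_iff_ne_empty.2 hSe, h⟩
              rw [if_neg this]
        have hcard1 : (Finset.univ.filter p).card ≤ k - 1 := E1_card Q hQ2 j
        have hcard2 : (Finset.univ.filter (fun S => ¬ p S)).card ≤ 2 ^ Q.card := by
          refine (Finset.card_filter_le _ _).trans ?_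
          rw [Finset.card_univ, Fintype.card_finset, Fintype.card_coe]
        calc ∏ S : Finset ↥Q, c S
            ≤ (1 + Real.log N) ^ (Finset.univ.filter p).card *
              2 ^ (Finset.univ.filter (fun S => ¬ p S)).card := by
              rw [hsplit, h1]
              refine mul_le_mul_of_nonneg_left h2 (by positivity)
          _ ≤ (1 + Real.log N) ^ (k - 1) * 2 ^ (2 ^ Q.card) := by
              refine mul_le_mul ?_ ?_ (by positivity) (by positivity)
              · exact pow_le_pow_right₀ (by linarith) hcard1
              · exact pow_le_pow_right₀ (by norm_num) hcard2
          _ = (2:ℝ) ^ (2 ^ Q.card) * (1 + Real.log N) ^ (k - 1) := mul_comm _ _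



lemma moebius_abs_le (m : ℕ) : |ArithmeticFunction.moebius m| ≤ (1:ℤ) := by
  rcases ArithmeticFunction.moebius_eq_or m with h | h | h <;> simp [h]

lemma hFun_abs_le (Q : Finset (Finset (Fin k))) (hQne : ∀ T ∈ Q, T.Nonempty)
    (n : Fin k → ℕ) (hn : ∀ i, n i ≠ 0) :
    |hFun k Q n| ≤ ((Fintype.piFinset (fun _ : ↥Q => (∏ i, n i).divisors)).filter
      (fun t => (∀ T, Squarefree (t T)) ∧ ∀ i, LL Q t i = n i)).card := by
  rw [hFun_eq Q hQne n hn]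
  refine (Finset.abs_sum_le_sum_abs _ _).trans ?_
  rw [← Finset.sum_boole]
  refine Finset.sum_le_sum fun t _ => ?_
  by_cases hsf : ∀ T, Squarefree (t T)
  · by_cases hL : ∀ i, LL Q t i = n i
    · rw [if_pos hL, mul_one, if_pos ⟨hsf, hL⟩, Finset.abs_prod]
      exact Finset.prod_le_one (fun T _ => abs_nonneg _) (fun T _ => moebius_abs_le _)
    · rw [if_neg hL, mul_zero, abs_zero]
      split <;> norm_num
  · obtain ⟨T0, hT0⟩ := not_forall.1 hsf
    rw [Finset.prod_eq_zero (Finset.mem_univ T0)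
      (ArithmeticFunction.moebius_eq_zero_of_not_squarefree hT0), zero_mul, abs_zero]
    split <;> norm_num

lemma rankin (N : ℕ) (hN : 1 ≤ N) (u : Fin k → ℕ) (hu : ∀ i, u i ≤ 1) (j : Fin k) (hj : u j = 0)
    (g : Fin k → ℕ) (hg : ∀ i, g i ∈ Finset.Icc 1 N) :
    (∏ i, (g i : ℝ) ^ u i)⁻¹
      ≤ (N : ℝ) ^ (k - 1 - ∑ i, u i) * ∏ i ∈ Finset.univ.erase j, (g i : ℝ)⁻¹ := by
  have hg1 : ∀ i, (1:ℝ) ≤ (g i : ℝ) := fun i => by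
    have := (Finset.mem_Icc.1 (hg i)).1; exact_mod_cast this
  have hgN : ∀ i, (g i : ℝ) ≤ (N : ℝ) := fun i => by
    have := (Finset.mem_Icc.1 (hg i)).2; exact_mod_cast this
  have hgpos : ∀ i, (0:ℝ) < (g i : ℝ) := fun i => lt_of_lt_of_le one_pos (hg1 i)
  have hXpos : (0:ℝ) < ∏ i, (g i : ℝ) ^ u i :=
    Finset.prod_pos fun i _ => pow_pos (hgpos i) _
  have hYpos : (0:ℝ) < ∏ i ∈ Finset.univ.erase j, (g i : ℝ) :=
    Finset.prod_pos fun i _ => hgpos i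
  have key : ∏ i ∈ Finset.univ.erase j, (g i : ℝ)
      ≤ (N : ℝ) ^ (k - 1 - ∑ i, u i) * ∏ i, (g i : ℝ) ^ u i := by
    have e1 : ∀ i ∈ Finset.univ.erase j, (g i : ℝ) = (g i : ℝ) ^ u i * (g i : ℝ) ^ (1 - u i) := by
      intro i _
      have h1 := hu i
      rw [← pow_add, (by omega : u i + (1 - u i) = 1), pow_one]
    calc ∏ i ∈ Finset.univ.erase j, (g i : ℝ)
        = ∏ i ∈ Finset.univ.erase j, (g i : ℝ) ^ u i * (g i : ℝ) ^ (1 - u i) :=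
          Finset.prod_congr rfl e1
      _ ≤ ∏ i ∈ Finset.univ.erase j, (g i : ℝ) ^ u i * (N : ℝ) ^ (1 - u i) := by
          refine Finset.prod_le_prod (fun i _ => by positivity) (fun i _ => ?_)
          exact mul_le_mul_of_nonneg_left
            (pow_le_pow_left₀ (le_of_lt (hgpos i)) (hgN i) _) (by positivity)
      _ = (∏ i ∈ Finset.univ.erase j, (g i : ℝ) ^ u i) *
            (N : ℝ) ^ (∑ i ∈ Finset.univ.erase j, (1 - u i)) := by
          rw [Finset.prod_mul_distrib, Finset.prod_pow_eq_pow_sum]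
      _ = (∏ i, (g i : ℝ) ^ u i) * (N : ℝ) ^ (k - 1 - ∑ i, u i) := by
          have h1 : ∑ i ∈ Finset.univ.erase j, (1 - u i)
              = ∑ i ∈ Finset.univ.erase j, 1 - ∑ i ∈ Finset.univ.erase j, u i := by
            rw [Finset.sum_tsub_distrib]
            intro i _; exact hu i
          have h2 : ∑ i ∈ Finset.univ.erase j, u i = ∑ i, u i :=
            Finset.sum_erase _ (by rw [hj])
          have h3 : ∏ i ∈ Finset.univ.erase j, (g i : ℝ) ^ u i = ∏ i, (g i : ℝ) ^ u i :=
            Finset.prod_erase _ (by rw [hj, pow_zero])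
          rw [h1, h2, h3, Finset.sum_const, smul_eq_mul, mul_one,
            Finset.card_erase_of_mem (Finset.mem_univ j), Finset.card_univ,
            Fintype.card_fin]
      _ = (N : ℝ) ^ (k - 1 - ∑ i, u i) * ∏ i, (g i : ℝ) ^ u i := mul_comm _ _
  have hpi : (∏ i ∈ Finset.univ.erase j, (g i:ℝ)⁻¹)
      = (∏ i ∈ Finset.univ.erase j, (g i:ℝ))⁻¹ := by
    rw [← Finset.prod_inv_distrib]
  rw [hpi, ← div_eq_mul_inv, le_div_iff₀ hYpos, inv_mul_eq_div, div_le_iff₀ hXpos]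
  exact key

lemma master (Q : Finset (Finset (Fin k))) (hQ2 : ∀ T ∈ Q, 2 ≤ T.card)
    (u : Fin k → ℕ) (hu : ∀ i, u i ≤ 1) (j : Fin k) (hj : u j = 0)
    (N : ℕ) (hN : 1 ≤ N) :
    ∑ n ∈ Fintype.piFinset (fun _ : Fin k => Finset.Icc 1 N),
      |(hFun k Q n : ℝ)| / ∏ i, (n i : ℝ) ^ u i
    ≤ (N : ℝ) ^ (k - 1 - ∑ i, u i) *
        ((2:ℝ) ^ (2 ^ Q.card) * (1 + Real.log N) ^ (k - 1)) := by
  classical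
  have hQne : ∀ T ∈ Q, T.Nonempty := fun T hT =>
    Finset.card_pos.1 (lt_of_lt_of_le two_pos (hQ2 T hT))
  set box := Fintype.piFinset (fun _ : Fin k => Finset.Icc 1 N) with hbox
  set sfT := (Fintype.piFinset (fun _ : ↥Q => Finset.Icc 1 N)).filter
      (fun t => ∀ T, Squarefree (t T)) with hsfT
  have hwpos : ∀ n : Fin k → ℕ, (0:ℝ) ≤ (∏ i, (n i : ℝ) ^ u i)⁻¹ := fun n => by positivity
  have hnmem : ∀ n ∈ box, ∀ i : Fin k, 1 ≤ n i ∧ n i ≤ N := by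
    intro n hn i
    have := Fintype.mem_piFinset.1 hn i
    exact Finset.mem_Icc.1 this
  calc ∑ n ∈ box, |(hFun k Q n : ℝ)| / ∏ i, (n i : ℝ) ^ u i
      ≤ ∑ n ∈ box, ∑ t ∈ sfT,
          (if ∀ i, LL Q t i = n i then (∏ i, (n i : ℝ) ^ u i)⁻¹ else 0) := by
        refine Finset.sum_le_sum fun n hn => ?_
        have hn0 : ∀ i, n i ≠ 0 := fun i => by have := (hnmem n hn i).1; omega
        rw [div_eq_mul_inv]
        set Sn := ((Fintype.piFinset (fun _ : ↥Q => (∏ i, n i).divisors)).filter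
          (fun t => (∀ T, Squarefree (t T)) ∧ ∀ i, LL Q t i = n i)) with hSn
        have h1 : |(hFun k Q n : ℝ)| ≤ (Sn.card : ℝ) := by
          rw [← Int.cast_abs]
          exact_mod_cast hFun_abs_le Q hQne n hn0
        have h2 : Sn ⊆ sfT.filter (fun t => ∀ i, LL Q t i = n i) := by
          intro t ht
          rw [hSn, Finset.mem_filter] at ht
          obtain ⟨htpi, hsf, hLn⟩ := ht
          refine Finset.mem_filter.2 ⟨Finset.mem_filter.2 ⟨?_, hsf⟩, hLn⟩
          rw [Fintype.mem_piFinset]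
          intro T
          have hTne : (T : Finset (Fin k)).Nonempty := hQne T T.2
          obtain ⟨i0, hi0⟩ := hTne
          have hdvd : t T ∣ LL Q t i0 := Finset.dvd_lcm (by simp [hi0])
          rw [hLn i0] at hdvd
          have ht0 : t T ≠ 0 := by
            intro h0
            rw [h0] at hdvd
            exact hn0 i0 (Nat.eq_zero_of_zero_dvd hdvd)
          refine Finset.mem_Icc.2 ⟨by omega, le_trans (Nat.le_of_dvd ?_ hdvd)
            (hnmem n hn i0).2⟩
          exact Nat.pos_of_ne_zero (hn0 i0)
        calc |(hFun k Q n : ℝ)| * (∏ i, (n i : ℝ) ^ u i)⁻¹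
            ≤ (Sn.card : ℝ) * (∏ i, (n i : ℝ) ^ u i)⁻¹ :=
              mul_le_mul_of_nonneg_right h1 (hwpos n)
          _ ≤ ((sfT.filter (fun t => ∀ i, LL Q t i = n i)).card : ℝ) *
                (∏ i, (n i : ℝ) ^ u i)⁻¹ := by
              refine mul_le_mul_of_nonneg_right ?_ (hwpos n)
              exact_mod_cast Finset.card_le_card h2
          _ = ∑ t ∈ sfT, (if ∀ i, LL Q t i = n i then (∏ i, (n i : ℝ) ^ u i)⁻¹ else 0) := by
              rw [← Finset.sum_filter, Finset.sum_const, nsmul_eq_mul]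
    _ = ∑ t ∈ sfT, ∑ n ∈ box,
          (if ∀ i, LL Q t i = n i then (∏ i, (n i : ℝ) ^ u i)⁻¹ else 0) := Finset.sum_comm
    _ ≤ ∑ t ∈ sfT, (N : ℝ) ^ (k - 1 - ∑ i, u i) *
          ∏ i ∈ Finset.univ.erase j, (LL Q t i : ℝ)⁻¹ := by
        refine Finset.sum_le_sum fun t _ => ?_
        have hcond : ∀ n : Fin k → ℕ, (∀ i, LL Q t i = n i) ↔ n = fun i => LL Q t i :=
          fun n => ⟨fun h => funext fun i => (h i).symm, fun h i => by rw [h]⟩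
        have e1 : ∑ n ∈ box, (if ∀ i, LL Q t i = n i then (∏ i, (n i : ℝ) ^ u i)⁻¹ else 0)
            = ∑ n ∈ box, (if n = (fun i => LL Q t i) then (∏ i, (n i : ℝ) ^ u i)⁻¹ else 0) := by
          refine Finset.sum_congr rfl fun n _ => ?_
          by_cases h : ∀ i, LL Q t i = n i
          · rw [if_pos h, if_pos ((hcond n).1 h)]
          · rw [if_neg h, if_neg (fun hh => h ((hcond n).2 hh))]
        rw [e1, Finset.sum_ite_eq' box (fun i => LL Q t i)
          (fun n => (∏ i, (n i : ℝ) ^ u i)⁻¹)]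
        by_cases hb : (fun i => LL Q t i) ∈ box
        · rw [if_pos hb]
          exact rankin N hN u hu j hj (fun i => LL Q t i)
            (fun i => Fintype.mem_piFinset.1 hb i)
        · rw [if_neg hb]
          positivity
    _ = (N : ℝ) ^ (k - 1 - ∑ i, u i) *
          ∑ t ∈ sfT, ∏ i ∈ Finset.univ.erase j, (LL Q t i : ℝ)⁻¹ := by
        rw [Finset.mul_sum]
    _ ≤ (N : ℝ) ^ (k - 1 - ∑ i, u i) *
          ((2:ℝ) ^ (2 ^ Q.card) * (1 + Real.log N) ^ (k - 1)) := by
        refine mul_le_mul_of_nonneg_left (Tsum_le Q hQ2 j N hN) (by positivity)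

/-- error bound: for any `u ∈ {0,1}^k` with `∑ u_i < k`,
`x^{∑ u_i} ∑_{d_1,…,d_k ≤ x} |h(d)| / (d_1^{u_1} ⋯ d_k^{u_k})
  ≪ x^{k-1} (log x)^{k-1}`. -/
theorem stmt_16 (k : ℕ) (hk : 2 ≤ k)
    (Q : Finset (Finset (Fin k))) (hQ : ∀ T ∈ Q, 2 ≤ T.card)
    (u : Fin k → ℕ) (hu : ∀ i, u i ≤ 1) (husum : ∑ i, u i < k) :
    (fun x : ℝ => x ^ (∑ i, u i) *
        ∑ d ∈ Fintype.piFinset fun _ : Fin k => Finset.Icc 1 ⌊x⌋₊,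
          |(hFun k Q d : ℝ)| / ∏ i, (d i : ℝ) ^ (u i))
      =O[atTop] fun x : ℝ => x ^ (k - 1) * (Real.log x) ^ (k - 1) := by
  classical
  obtain ⟨j, hj⟩ : ∃ j, u j = 0 := by
    by_contra h
    push_neg at h
    have h1 : ∀ i, 1 ≤ u i := fun i => Nat.one_le_iff_ne_zero.2 (h i)
    have h2 : k ≤ ∑ i, u i := by
      calc k = ∑ _i : Fin k, 1 := by simp
        _ ≤ ∑ i, u i := Finset.sum_le_sum fun i _ => h1 i
    omega
  rw [isBigO_iff]
  refine ⟨(2:ℝ) ^ (2 ^ Q.card) * 2 ^ (k - 1), ?_⟩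
  filter_upwards [eventually_ge_atTop (3:ℝ)] with x hx
  have hx0 : (0:ℝ) ≤ x := by linarith
  set N := ⌊x⌋₊ with hNdef
  have hN3 : 3 ≤ N := Nat.le_floor (by exact_mod_cast hx)
  have hN1 : 1 ≤ N := by omega
  have hNx : (N:ℝ) ≤ x := Nat.floor_le hx0
  have hNpos : (0:ℝ) < (N:ℝ) := by exact_mod_cast Nat.pos_of_ne_zero (by omega)
  have hlogx1 : 1 ≤ Real.log x := by
    have h1 : Real.exp 1 ≤ 3 := le_of_lt (lt_of_lt_of_le Real.exp_one_lt_d9 (by norm_num))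
    calc (1:ℝ) = Real.log (Real.exp 1) := (Real.log_exp 1).symm
      _ ≤ Real.log x := Real.log_le_log (Real.exp_pos 1) (h1.trans hx)
  have hlogN : Real.log N ≤ Real.log x := Real.log_le_log hNpos hNx
  have hlogN0 : 0 ≤ Real.log N := Real.log_nonneg (by exact_mod_cast hN1)
  have hsum_nonneg : 0 ≤ ∑ d ∈ Fintype.piFinset fun _ : Fin k => Finset.Icc 1 N,
      |(hFun k Q d : ℝ)| / ∏ i, (d i : ℝ) ^ (u i) := by
    refine Finset.sum_nonneg fun d _ => ?_
    refine div_nonneg (abs_nonneg _) (Finset.prod_nonneg fun i _ => by positivity)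
  have hmaster := master Q hQ u hu j hj N hN1
  have hfx_nonneg : 0 ≤ x ^ (∑ i, u i) *
      ∑ d ∈ Fintype.piFinset fun _ : Fin k => Finset.Icc 1 N,
        |(hFun k Q d : ℝ)| / ∏ i, (d i : ℝ) ^ (u i) :=
    mul_nonneg (by positivity) hsum_nonneg
  have hgx_nonneg : 0 ≤ x ^ (k - 1) * Real.log x ^ (k - 1) := by positivity
  rw [Real.norm_eq_abs, Real.norm_eq_abs, abs_of_nonneg hfx_nonneg, abs_of_nonneg hgx_nonneg]
  calc x ^ (∑ i, u i) *
        ∑ d ∈ Fintype.piFinset fun _ : Fin k => Finset.Icc 1 N,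
          |(hFun k Q d : ℝ)| / ∏ i, (d i : ℝ) ^ (u i)
      ≤ x ^ (∑ i, u i) * ((N : ℝ) ^ (k - 1 - ∑ i, u i) *
          ((2:ℝ) ^ (2 ^ Q.card) * (1 + Real.log N) ^ (k - 1))) :=
        mul_le_mul_of_nonneg_left hmaster (by positivity)
    _ ≤ x ^ (∑ i, u i) * (x ^ (k - 1 - ∑ i, u i) *
          ((2:ℝ) ^ (2 ^ Q.card) * (2 * Real.log x) ^ (k - 1))) := by
        have hb1 : (N:ℝ) ^ (k - 1 - ∑ i, u i) ≤ x ^ (k - 1 - ∑ i, u i) :=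
          pow_le_pow_left₀ (le_of_lt hNpos) hNx _
        have hb2 : (1 + Real.log N) ^ (k - 1) ≤ (2 * Real.log x) ^ (k - 1) :=
          pow_le_pow_left₀ (by linarith) (by linarith) _
        have hb3 : (0:ℝ) ≤ (2:ℝ) ^ (2 ^ Q.card) := by positivity
        refine mul_le_mul_of_nonneg_left ?_ (by positivity)
        refine mul_le_mul hb1 (mul_le_mul_of_nonneg_left hb2 hb3) (by positivity) (by positivity)
    _ = (2:ℝ) ^ (2 ^ Q.card) * 2 ^ (k - 1) * (x ^ (k - 1) * Real.log x ^ (k - 1)) := by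
        rw [mul_pow]
        have hsx : x ^ (∑ i, u i) * x ^ (k - 1 - ∑ i, u i) = x ^ (k - 1) := by
          rw [← pow_add]
          congr 1
          omega
        calc x ^ (∑ i, u i) * (x ^ (k - 1 - ∑ i, u i) *
              ((2:ℝ) ^ (2 ^ Q.card) * ((2:ℝ) ^ (k-1) * Real.log x ^ (k - 1))))
            = (x ^ (∑ i, u i) * x ^ (k - 1 - ∑ i, u i)) *
              ((2:ℝ) ^ (2 ^ Q.card) * ((2:ℝ) ^ (k-1) * Real.log x ^ (k - 1))) := by ring
          _ = _ := by rw [hsx]; ring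
end
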